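/- Let G = (V,E) be a finite simple graph on n vertices with independence number α, and let p ≥ 1 be an integer. Let G' be the graph obtained from G by attaching to each vertex v ∈ V exactly p new pendant vertices, each adjacent only to v (so G' has n(p+1) vertices). Then the maximum size μ of a minimal vertex cover of G' satisfies p·α + n − α ≤ μ ≤ p·α + n. -/

import Mathlib

/-- `C` is a vertex cover: every edge has an endpoint in `C`. -/
def IsVertexCover {V : Type*} (G : SimpleGraph V) (C : Set V) : Prop :=
  ∀ ⦃u v⦄, G.Adj u v → u ∈ C ∨ v ∈ C

/-- `C` is a minimal vertex cover: a vertex cover no proper subset of which is one. -/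
def IsMinimalVertexCover {V : Type*} (G : SimpleGraph V) (C : Set V) : Prop :=
  IsVertexCover G C ∧ ∀ D : Set V, D ⊂ C → ¬ IsVertexCover G D

/-- `I` is an independent set: no two of its vertices are adjacent. -/
def IsIndepSet {V : Type*} (G : SimpleGraph V) (I : Set V) : Prop :=
  ∀ ⦃u⦄, u ∈ I → ∀ ⦃v⦄, v ∈ I → ¬ G.Adj u v

/-- The graph obtained from `G` by attaching `p` new pendant vertices to each
vertex: `Sum.inl u` are the original vertices, and `Sum.inr (v, i)` is the `i`-th
pendant vertex attached to `v` (adjacent only to `Sum.inl v`). -/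
def pendantGraph {V : Type*} (G : SimpleGraph V) (p : ℕ) :
    SimpleGraph (V ⊕ V × Fin p) where
  Adj x y :=
    match x, y with
    | Sum.inl u, Sum.inl v => G.Adj u v
    | Sum.inl u, Sum.inr (v, _) => u = v
    | Sum.inr (v, _), Sum.inl u => u = v
    | Sum.inr _, Sum.inr _ => False
  symm := by
    constructor
    rintro (u | ⟨v, i⟩) (u' | ⟨v', i'⟩) h
    · exact G.symm.symm _ _ h
    · exact h
    · exact h
    · exact h
  loopless := by
    constructor
    rintro (u | ⟨v, i⟩) h
    · exact G.loopless.irrefl u h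
    · exact h

lemma ncard_prod' {A B : Type*} (s : Set A) (t : Set B) :
    (s ×ˢ t).ncard = s.ncard * t.ncard := by
  rw [← Nat.card_coe_set_eq, ← Nat.card_coe_set_eq, ← Nat.card_coe_set_eq,
    Nat.card_congr (Equiv.Set.prod s t), Nat.card_prod]

/-- cardinality of the standard-form cover `inl '' A ∪ inr '' (Aᶜ ×ˢ univ)` -/
lemma coverCard {V : Type*} [Fintype V] (p : ℕ) (A B : Set V) :
    ((Sum.inl '' A ∪ Sum.inr '' (B ×ˢ (Set.univ : Set (Fin p)))) :
      Set (V ⊕ V × Fin p)).ncard = A.ncard + B.ncard * p := by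
  rw [Set.ncard_union_eq (by
      rw [Set.disjoint_left]; rintro x ⟨a, _, rfl⟩ ⟨b, _, h⟩; cases h)
    (Set.toFinite _) (Set.toFinite _),
    Set.ncard_image_of_injective _ Sum.inl_injective,
    Set.ncard_image_of_injective _ Sum.inr_injective, ncard_prod']
  simp [Set.ncard_univ]

theorem maxMinimalVertexCover_pendantGraph {V : Type*} [Fintype V]
    (G : SimpleGraph V) (n : ℕ) (hn : n = Fintype.card V)
    (α : ℕ) (hα : IsGreatest {k | ∃ I : Set V, IsIndepSet G I ∧ I.ncard = k} α)
    (p : ℕ) (hp : 1 ≤ p)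
    (μ : ℕ)
    (hμ : IsGreatest
      {k | ∃ C : Set (V ⊕ V × Fin p),
        IsMinimalVertexCover (pendantGraph G p) C ∧ C.ncard = k} μ) :
    p * α + n - α ≤ μ ∧ μ ≤ p * α + n := by
  obtain ⟨⟨I, hI, hIcard⟩, hαmax⟩ := hα
  have hαn : α ≤ n := by
    calc α = I.ncard := hIcard.symm
      _ ≤ (Set.univ : Set V).ncard := Set.ncard_le_ncard (Set.subset_univ I) (Set.toFinite _)
      _ = n := by rw [Set.ncard_univ, Nat.card_eq_fintype_card, hn]
  constructor
  · -- lower bound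
    set C : Set (V ⊕ V × Fin p) :=
      Sum.inl '' Iᶜ ∪ Sum.inr '' (I ×ˢ (Set.univ : Set (Fin p))) with hC
    have hmemC : ∀ x, x ∈ C ↔
        (∃ u ∉ I, x = Sum.inl u) ∨ (∃ v ∈ I, ∃ i, x = Sum.inr (v, i)) := by
      rintro (u | ⟨v, i⟩) <;> simp [hC] <;> aesop
    have hcov : IsVertexCover (pendantGraph G p) C := by
      rintro (u | ⟨v, i⟩) (u' | ⟨v', i'⟩) hadj
      · by_cases hu : u ∈ I
        · by_cases hu' : u' ∈ I
          · exact absurd hadj (hI hu hu')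
          · exact Or.inr ((hmemC _).2 (Or.inl ⟨u', hu', rfl⟩))
        · exact Or.inl ((hmemC _).2 (Or.inl ⟨u, hu, rfl⟩))
      · -- u = v'
        obtain rfl : u = v' := hadj
        by_cases hu : u ∈ I
        · exact Or.inr ((hmemC _).2 (Or.inr ⟨u, hu, i', rfl⟩))
        · exact Or.inl ((hmemC _).2 (Or.inl ⟨u, hu, rfl⟩))
      · obtain rfl : u' = v := hadj
        by_cases hu : u' ∈ I
        · exact Or.inl ((hmemC _).2 (Or.inr ⟨u', hu, i, rfl⟩))
        · exact Or.inr ((hmemC _).2 (Or.inl ⟨u', hu, rfl⟩))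
      · exact absurd hadj not_false
    have hmin : IsMinimalVertexCover (pendantGraph G p) C := by
      refine ⟨hcov, fun D hD hDcov => ?_⟩
      obtain ⟨x, hxC, hxD⟩ := Set.exists_of_ssubset hD
      rcases (hmemC x).1 hxC with ⟨u, hu, rfl⟩ | ⟨v, hv, i, rfl⟩
      · -- u ∉ I : there is w ∈ I adjacent to u
        have : ∃ w ∈ I, G.Adj u w := by
          by_contra hno
          push_neg at hno
          have hind : IsIndepSet G (insert u I) := by
            rintro a ha b hb hab
            rcases ha with rfl | ha
            · rcases hb with rfl | hb
              · exact G.loopless.irrefl _ hab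
              · exact hno _ hb hab
            · rcases hb with rfl | hb
              · exact hno _ ha hab.symm
              · exact hI ha hb hab
          have hcard : (insert u I).ncard = α + 1 := by
            rw [Set.ncard_insert_of_notMem hu (Set.toFinite _), hIcard]
          have := hαmax ⟨insert u I, hind, hcard⟩
          omega
        obtain ⟨w, hw, hadj⟩ := this
        have hwD : Sum.inl w ∉ D := by
          intro hwD
          have := (hmemC (Sum.inl w)).1 (hD.1 hwD)
          rcases this with ⟨u', hu', he⟩ | ⟨v', _, i', he⟩
          · cases he; exact hu' hw
          · cases he
        rcases hDcov (show (pendantGraph G p).Adj (Sum.inl u) (Sum.inl w) from hadj)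
          with h | h
        · exact hxD h
        · exact hwD h
      · -- pendant of v ∈ I: edge inl v – inr (v,i) uncovered
        have hvD : Sum.inl v ∉ D := by
          intro hvD
          rcases (hmemC (Sum.inl v)).1 (hD.1 hvD) with ⟨u', hu', he⟩ | ⟨v', _, i', he⟩
          · cases he; exact hu' hv
          · cases he
        rcases hDcov (show (pendantGraph G p).Adj (Sum.inl v) (Sum.inr (v, i)) from rfl)
          with h | h
        · exact hvD h
        · exact hxD h
    have hCcard : C.ncard = (n - α) + α * p := by
      rw [hC, coverCard, hIcard]
      have h1 := Set.ncard_add_ncard_compl I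
      have h2 : Nat.card V = n := by rw [Nat.card_eq_fintype_card, hn]
      rw [hIcard] at h1
      omega
    have := hμ.2 ⟨C, hmin, hCcard⟩
    rw [mul_comm p α]
    omega
  · -- upper bound
    obtain ⟨C, ⟨hcov, hmin⟩, hCcard⟩ := hμ.1
    set A : Set V := {v | Sum.inl v ∈ C} with hA
    have hpend : ∀ v (i : Fin p), Sum.inr (v, i) ∈ C ↔ v ∉ A := by
      intro v i
      constructor
      · intro hin hvA
        refine hmin (C \ {Sum.inr (v, i)}) ⟨Set.diff_subset, fun hsub => ?_⟩ ?_
        · exact (hsub hin).2 rfl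
        · rintro (u | ⟨w, j⟩) (u' | ⟨w', j'⟩) hadj
          · rcases hcov hadj with h | h
            · exact Or.inl ⟨h, by simp⟩
            · exact Or.inr ⟨h, by simp⟩
          · -- u = w'
            obtain rfl : u = w' := hadj
            by_cases he : (Sum.inr (u, j') : V ⊕ V × Fin p) = Sum.inr (v, i)
            · obtain rfl : u = v := congrArg (fun x => Sum.elim id Prod.fst x) he
              exact Or.inl ⟨hvA, by simp⟩
            · rcases hcov (show (pendantGraph G p).Adj (Sum.inl u) (Sum.inr (u, j'))
                  from rfl) with h | h
              · exact Or.inl ⟨h, by simp⟩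
              · exact Or.inr ⟨h, he⟩
          · obtain rfl : u' = w := hadj
            by_cases he : (Sum.inr (u', j) : V ⊕ V × Fin p) = Sum.inr (v, i)
            · obtain rfl : u' = v := congrArg (fun x => Sum.elim id Prod.fst x) he
              exact Or.inr ⟨hvA, by simp⟩
            · rcases hcov (show (pendantGraph G p).Adj (Sum.inr (u', j)) (Sum.inl u')
                  from rfl) with h | h
              · exact Or.inl ⟨h, he⟩
              · exact Or.inr ⟨h, by simp⟩
          · exact absurd hadj not_false
      · intro hvA
        rcases hcov (show (pendantGraph G p).Adj (Sum.inl v) (Sum.inr (v, i)) from rfl)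
          with h | h
        · exact absurd h hvA
        · exact h
    have hAind : IsIndepSet G Aᶜ := by
      intro u hu w hw hadj
      rcases hcov (show (pendantGraph G p).Adj (Sum.inl u) (Sum.inl w) from hadj) with h | h
      · exact hu h
      · exact hw h
    have hCeq : C = Sum.inl '' A ∪ Sum.inr '' (Aᶜ ×ˢ (Set.univ : Set (Fin p))) := by
      ext x
      rcases x with u | ⟨v, i⟩
      · constructor
        · intro h; exact Or.inl ⟨u, h, rfl⟩
        · rintro (⟨a, ha, he⟩ | ⟨⟨b, j⟩, _, he⟩)
          · cases he; exact ha
          · cases he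
      · constructor
        · intro h
          exact Or.inr ⟨(v, i), ⟨(hpend v i).1 h, Set.mem_univ _⟩, rfl⟩
        · rintro (⟨a, ha, he⟩ | ⟨⟨b, j⟩, ⟨hb, -⟩, he⟩)
          · cases he
          · rw [← he]; exact (hpend _ _).2 hb
    have hAcard : A.ncard ≤ n := by
      calc A.ncard ≤ (Set.univ : Set V).ncard :=
            Set.ncard_le_ncard (Set.subset_univ A) (Set.toFinite _)
        _ = n := by rw [Set.ncard_univ, Nat.card_eq_fintype_card, hn]
    have hAcc : Aᶜ.ncard ≤ α := hαmax ⟨Aᶜ, hAind, rfl⟩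
    have : μ = A.ncard + Aᶜ.ncard * p := by rw [← hCcard, hCeq, coverCard]
    have hple : Aᶜ.ncard * p ≤ α * p := Nat.mul_le_mul_right p hAcc
    rw [mul_comm p α]
    omega
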